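/- Let f ∈ ℝ[x,y] be of degree n ≥ 3 with homogenization F and H_f the degree-(2n−4) homogenization of Hess f. With B(u,v,ω) = −uF_uv − vF_vv and S = u²F_uu + 2uvF_uv + v²F_vv, the identity F_vv·S − B² = H_f holds as polynomials in (u,v,ω) after evaluation at u = 1, i.e., F_vv(1,v,ω)·S(1,v,ω) − B(1,v,ω)² = H_f(1,v,ω). -/

import Mathlib

open MvPolynomial

/-- The Hessian determinant `f_xx f_yy - f_xy ^ 2` of a polynomial in two variables. -/
noncomputable def Hess (P : MvPolynomial (Fin 2) ℝ) : MvPolynomial (Fin 2) ℝ :=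
  pderiv 0 (pderiv 0 P) * pderiv 1 (pderiv 1 P) - (pderiv 0 (pderiv 1 P)) ^ 2

/-- The homogenization `F(u,v,ω) = Σ_{i=0}^{n} ω^{n-i} f_i(u,v)` of a polynomial of degree `n`. -/
noncomputable def homog3 (f : MvPolynomial (Fin 2) ℝ) (n : ℕ) : MvPolynomial (Fin 3) ℝ :=
  ∑ i ∈ Finset.range (n + 1),
    X 2 ^ (n - i) * rename (Fin.castSucc : Fin 2 → Fin 3) (homogeneousComponent i f)

noncomputable def Fuu (F : MvPolynomial (Fin 3) ℝ) : MvPolynomial (Fin 3) ℝ :=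
  pderiv 0 (pderiv 0 F)
noncomputable def Fuv (F : MvPolynomial (Fin 3) ℝ) : MvPolynomial (Fin 3) ℝ :=
  pderiv 0 (pderiv 1 F)
noncomputable def Fvv (F : MvPolynomial (Fin 3) ℝ) : MvPolynomial (Fin 3) ℝ :=
  pderiv 1 (pderiv 1 F)
noncomputable def Acal (F : MvPolynomial (Fin 3) ℝ) : MvPolynomial (Fin 3) ℝ :=
  -(X 0 * Fuu F) - X 1 * Fuv F
noncomputable def Bcal (F : MvPolynomial (Fin 3) ℝ) : MvPolynomial (Fin 3) ℝ :=
  -(X 0 * Fuv F) - X 1 * Fvv F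
noncomputable def Scal (F : MvPolynomial (Fin 3) ℝ) : MvPolynomial (Fin 3) ℝ :=
  X 0 ^ 2 * Fuu F + 2 * X 0 * X 1 * Fuv F + X 1 ^ 2 * Fvv F

/-- The homogenization of `Hess f` to degree `2n - 4`: the projective Hessian `H_f`. -/
noncomputable def Hf3 (f : MvPolynomial (Fin 2) ℝ) (n : ℕ) : MvPolynomial (Fin 3) ℝ :=
  ∑ j ∈ Finset.range (2 * n - 3),
    X 2 ^ (2 * n - 4 - j) * rename (Fin.castSucc : Fin 2 → Fin 3) (homogeneousComponent j (Hess f))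
section DiscAux

open Finsupp

lemma degree_add' {σ : Type*} (a b : σ →₀ ℕ) : (a + b).degree = a.degree + b.degree := by
  simp only [Finsupp.degree_eq_weight_one]
  exact map_add _ a b

lemma degree_single_one {σ : Type*} [DecidableEq σ] (i : σ) :
    (Finsupp.single i 1).degree = 1 := by
  show ∑ j ∈ (Finsupp.single i 1).support, (Finsupp.single i 1) j = 1
  simp [Finsupp.support_single_ne_zero i one_ne_zero]

lemma degree_sub_single {σ : Type*} [DecidableEq σ] {d : σ →₀ ℕ} {i : σ} (h : d i ≠ 0) :
    (d - Finsupp.single i 1).degree + 1 = d.degree := by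
  have hle : Finsupp.single i 1 ≤ d := Finsupp.single_le_iff.mpr (Nat.one_le_iff_ne_zero.mpr h)
  have key : (d - Finsupp.single i 1) + Finsupp.single i 1 = d := tsub_add_cancel_of_le hle
  calc (d - Finsupp.single i 1).degree + 1
      = (d - Finsupp.single i 1).degree + (Finsupp.single i 1).degree := by
        rw [degree_single_one]
    _ = ((d - Finsupp.single i 1) + Finsupp.single i 1).degree := (degree_add' _ _).symm
    _ = d.degree := by rw [key]

lemma isHomogeneous_pderiv {σ : Type*} [DecidableEq σ] {φ : MvPolynomial σ ℝ} {m : ℕ}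
    (h : φ.IsHomogeneous (m + 1)) (i : σ) : (pderiv i φ).IsHomogeneous m := by
  rw [φ.as_sum, map_sum]
  apply IsHomogeneous.sum
  intro d hd
  rw [pderiv_monomial]
  by_cases h0 : d i = 0
  · simp only [h0, Nat.cast_zero, mul_zero, map_zero]
    exact isHomogeneous_zero _ _ _
  · apply isHomogeneous_monomial
    have hdeg : d.degree = m + 1 := by
      have := h (MvPolynomial.mem_support_iff.mp hd)
      rwa [Finsupp.degree_eq_weight_one]
    have := degree_sub_single (d := d) (i := i) h0
    omega

lemma homogeneousComponent_pderiv {σ : Type*} [DecidableEq σ] (i : σ)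
    (p : MvPolynomial σ ℝ) (j : ℕ) :
    homogeneousComponent j (pderiv i p) = pderiv i (homogeneousComponent (j + 1) p) := by
  conv_lhs => rw [← p.sum_homogeneousComponent]
  rw [map_sum, map_sum]
  refine (Finset.sum_eq_single (j + 1) ?_ ?_).trans ?_
  · intro b _ hb
    rcases Nat.eq_zero_or_pos b with rfl | hbpos
    · simp
    · obtain ⟨c, rfl⟩ := Nat.exists_eq_add_of_lt hbpos
      rw [zero_add] at *
      have hhom := isHomogeneous_pderiv (homogeneousComponent_isHomogeneous (c + 1) p) i
      rw [homogeneousComponent_of_mem ((mem_homogeneousSubmodule _ _).mpr hhom), if_neg (show ¬ j = c by omega)]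
  · intro hnot
    simp only [Finset.mem_range, not_lt] at hnot
    rw [homogeneousComponent_eq_zero (j + 1) p (by omega)]
    simp
  · have hhom := isHomogeneous_pderiv (homogeneousComponent_isHomogeneous (j + 1) p) i
    rw [homogeneousComponent_of_mem ((mem_homogeneousSubmodule _ _).mpr hhom), if_pos rfl]

lemma pderiv_homog3 (i : Fin 2) (g : MvPolynomial (Fin 2) ℝ) (d : ℕ) :
    pderiv (Fin.castSucc i) (homog3 g (d + 1)) = homog3 (pderiv i g) d := by
  have hcast : (2 : Fin 3) ≠ Fin.castSucc i := by fin_cases i <;> decide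
  have hterm : ∀ (k : ℕ) (q : MvPolynomial (Fin 2) ℝ),
      pderiv (Fin.castSucc i) ((X 2 : MvPolynomial (Fin 3) ℝ) ^ k * rename Fin.castSucc q) =
        X 2 ^ k * rename Fin.castSucc (pderiv i q) := by
    intro k q
    rw [pderiv_mul, pderiv_pow, pderiv_X_of_ne hcast,
      pderiv_rename (Fin.castSucc_injective 2)]
    ring
  unfold homog3
  rw [map_sum]
  simp_rw [hterm]
  rw [Finset.sum_range_succ']
  have h0 : pderiv i (homogeneousComponent 0 g) = 0 := by
    rw [homogeneousComponent_zero, pderiv_C]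
  rw [h0, map_zero, mul_zero, add_zero]
  refine Finset.sum_congr rfl fun m hm => ?_
  rw [homogeneousComponent_pderiv]
  have : d + 1 - (m + 1) = d - m := by omega
  rw [this]

lemma eval_cons_castSucc (u v ω : ℝ) (q : MvPolynomial (Fin 2) ℝ) :
    eval ![u, v, ω] (rename Fin.castSucc q) = eval ![u, v] q := by
  have hc : (![u, v, ω] : Fin 3 → ℝ) ∘ Fin.castSucc = ![u, v] := by
    funext i
    fin_cases i <;> rfl
  rw [eval_rename, hc]

lemma eval_homog3 (g : MvPolynomial (Fin 2) ℝ) (d : ℕ) (u v ω : ℝ) :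
    eval ![u, v, ω] (homog3 g d) =
      ∑ j ∈ Finset.range (d + 1), ω ^ (d - j) * eval ![u, v] (homogeneousComponent j g) := by
  unfold homog3
  rw [map_sum]
  refine Finset.sum_congr rfl fun j _ => ?_
  rw [map_mul, map_pow, eval_X, eval_cons_castSucc]
  norm_num
  exact Or.inl rfl

lemma eval_smul_isHomogeneous {φ : MvPolynomial (Fin 2) ℝ} {m : ℕ}
    (h : φ.IsHomogeneous m) (c : ℝ) (x : Fin 2 → ℝ) :
    eval (fun i => c * x i) φ = c ^ m * eval x φ := by
  rw [φ.as_sum, map_sum, map_sum, Finset.mul_sum]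
  refine Finset.sum_congr rfl fun d hd => ?_
  rw [eval_monomial, eval_monomial]
  have hdeg : d.degree = m := by
    have := h (MvPolynomial.mem_support_iff.mp hd)
    rwa [Finsupp.degree_eq_weight_one]
  have key : (d.prod fun n e => (c * x n) ^ e) = c ^ m * d.prod fun n e => x n ^ e := by
    simp_rw [mul_pow]
    rw [Finsupp.prod_mul]
    congr 1
    rw [← hdeg, Finsupp.prod, Finsupp.degree, Finset.prod_pow_eq_pow_sum]
    rfl
  rw [key]
  ring

lemma sum_homogeneousComponent_of_le {g : MvPolynomial (Fin 2) ℝ} {d : ℕ}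
    (hg : g.totalDegree ≤ d) :
    ∑ j ∈ Finset.range (d + 1), homogeneousComponent j g = g := by
  have hsub := Finset.sum_subset (s₁ := Finset.range (g.totalDegree + 1))
    (s₂ := Finset.range (d + 1)) (f := fun j => homogeneousComponent j g)
    (Finset.range_subset_range.mpr (by omega))
    (fun j hjt hjs => homogeneousComponent_eq_zero j g
      (by simp only [Finset.mem_range, not_lt] at hjt hjs; omega))
  rw [← hsub, g.sum_homogeneousComponent]

lemma eval_homog3_of_ne {g : MvPolynomial (Fin 2) ℝ} {d : ℕ} (hg : g.totalDegree ≤ d)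
    (u v : ℝ) {ω : ℝ} (hω : ω ≠ 0) :
    eval ![u, v, ω] (homog3 g d) = ω ^ d * eval ![u / ω, v / ω] g := by
  rw [eval_homog3]
  conv_rhs => rw [← sum_homogeneousComponent_of_le hg]
  rw [map_sum, Finset.mul_sum]
  refine Finset.sum_congr rfl fun j hj => ?_
  have hx : (![u / ω, v / ω] : Fin 2 → ℝ) = fun i => ω⁻¹ * ![u, v] i := by
    funext i
    fin_cases i <;> simp [div_eq_inv_mul]
  rw [hx, eval_smul_isHomogeneous (homogeneousComponent_isHomogeneous j g)]
  rw [Finset.mem_range] at hj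
  have hsplit : ω ^ d = ω ^ (d - j) * ω ^ j := by
    rw [← pow_add]
    congr 1
    omega
  rw [hsplit, inv_pow]
  field_simp

lemma totalDegree_pderiv_le (i : Fin 2) (p : MvPolynomial (Fin 2) ℝ) {d : ℕ}
    (h : p.totalDegree ≤ d + 1) : (pderiv i p).totalDegree ≤ d := by
  conv_lhs => rw [p.as_sum, map_sum]
  refine (totalDegree_finset_sum _ _).trans (Finset.sup_le fun s hs => ?_)
  rw [pderiv_monomial]
  by_cases h0 : s i = 0
  · simp [h0]
  · refine (totalDegree_monomial_le _ _).trans ?_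
    show (s - Finsupp.single i 1).degree ≤ d
    have h2 := degree_sub_single (d := s) (i := i) h0
    have h3 : s.degree ≤ d + 1 := le_trans (le_totalDegree hs) h
    omega

end DiscAux

/-- The discriminant identity `F_vv·S - B² = H_f` in the affine chart `u = 1`. -/
theorem discriminant_eq_projective_hessian (n : ℕ) (hn : 3 ≤ n)
    (f : MvPolynomial (Fin 2) ℝ) (hdeg : f.totalDegree = n) :
    ∀ v ω : ℝ,
      eval ![1, v, ω] (Fvv (homog3 f n) * Scal (homog3 f n) - (Bcal (homog3 f n)) ^ 2) =
        eval ![1, v, ω] (Hf3 f n) := by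
  obtain ⟨m, rfl⟩ : ∃ m, n = m + 3 := ⟨n - 3, by omega⟩
  have hpoly : Fvv (homog3 f (m + 3)) * Scal (homog3 f (m + 3)) - Bcal (homog3 f (m + 3)) ^ 2 =
      X 0 ^ 2 * (Fuu (homog3 f (m + 3)) * Fvv (homog3 f (m + 3)) -
        Fuv (homog3 f (m + 3)) ^ 2) := by
    simp only [Fvv, Scal, Bcal, Fuu, Fuv]
    ring
  have h0cast : (0 : Fin 3) = Fin.castSucc (0 : Fin 2) := rfl
  have h1cast : (1 : Fin 3) = Fin.castSucc (1 : Fin 2) := rfl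
  have hsplit3 : m + 3 = m + 1 + 1 + 1 := rfl
  have hFuu : Fuu (homog3 f (m + 3)) = homog3 (pderiv 0 (pderiv 0 f)) (m + 1) := by
    unfold Fuu
    rw [h0cast, hsplit3, pderiv_homog3, pderiv_homog3]
  have hFuv : Fuv (homog3 f (m + 3)) = homog3 (pderiv 0 (pderiv 1 f)) (m + 1) := by
    unfold Fuv
    rw [h0cast, h1cast, hsplit3, pderiv_homog3, pderiv_homog3]
  have hFvv : Fvv (homog3 f (m + 3)) = homog3 (pderiv 1 (pderiv 1 f)) (m + 1) := by
    unfold Fvv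
    rw [h1cast, hsplit3, pderiv_homog3, pderiv_homog3]
  have hHf3 : Hf3 f (m + 3) = homog3 (Hess f) (2 * m + 2) := by
    unfold Hf3 homog3
    have e1 : 2 * (m + 3) - 3 = 2 * m + 2 + 1 := by omega
    rw [e1]
    refine Finset.sum_congr rfl fun j _ => ?_
    have e2 : 2 * (m + 3) - 4 = 2 * m + 2 := by omega
    rw [e2]
  have hd2 : ∀ i i' : Fin 2, (pderiv i (pderiv i' f)).totalDegree ≤ m + 1 := by
    intro i i'
    apply totalDegree_pderiv_le
    exact totalDegree_pderiv_le _ _ (by omega)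
  have hHessdeg : (Hess f).totalDegree ≤ 2 * m + 2 := by
    unfold Hess
    refine (totalDegree_sub _ _).trans (max_le ?_ ?_)
    · refine (totalDegree_mul _ _).trans ?_
      have := hd2 0 0
      have := hd2 1 1
      omega
    · refine (totalDegree_pow _ _).trans ?_
      have := hd2 0 1
      omega
  intro v ω
  have hcont : ∀ P : MvPolynomial (Fin 3) ℝ, Continuous fun t : ℝ => eval ![1, v, t] P := by
    intro P
    have hvec : Continuous fun t : ℝ => (![1, v, t] : Fin 3 → ℝ) := by
      apply continuous_pi
      intro i
      fin_cases i
      · exact continuous_const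
      · exact continuous_const
      · exact continuous_id
    exact (MvPolynomial.continuous_eval P).comp hvec
  have key : (fun t : ℝ => eval ![1, v, t]
        (Fvv (homog3 f (m + 3)) * Scal (homog3 f (m + 3)) - Bcal (homog3 f (m + 3)) ^ 2)) =
      fun t : ℝ => eval ![1, v, t] (Hf3 f (m + 3)) := by
    refine Continuous.ext_on (dense_compl_singleton (0 : ℝ)) (hcont _) (hcont _) ?_
    intro w hw
    have hw0 : w ≠ 0 := by
      simpa [Set.mem_compl_iff] using hw
    show eval ![1, v, w] (Fvv (homog3 f (m + 3)) * Scal (homog3 f (m + 3)) -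
        Bcal (homog3 f (m + 3)) ^ 2) = eval ![1, v, w] (Hf3 f (m + 3))
    rw [hpoly, hHf3]
    simp only [map_mul, map_sub, map_pow, eval_X]
    rw [hFuu, hFuv, hFvv,
      eval_homog3_of_ne (hd2 0 0) 1 v hw0,
      eval_homog3_of_ne (hd2 0 1) 1 v hw0,
      eval_homog3_of_ne (hd2 1 1) 1 v hw0,
      eval_homog3_of_ne hHessdeg 1 v hw0]
    have hHessEval : eval ![1 / w, v / w] (Hess f) =
        eval ![1 / w, v / w] (pderiv 0 (pderiv 0 f)) *
          eval ![1 / w, v / w] (pderiv 1 (pderiv 1 f)) -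
          eval ![1 / w, v / w] (pderiv 0 (pderiv 1 f)) ^ 2 := by
      unfold Hess
      rw [map_sub, map_mul, map_pow]
    rw [hHessEval]
    have h10 : (![1, v, w] : Fin 3 → ℝ) 0 = 1 := rfl
    rw [h10]
    ring
  exact congrFun key ω
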